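/- Let l ≥ 3 and let (G_l,σ) be the signed graph obtained from a negative cycle of length l by adding, for each edge e of the cycle, one new vertex joined to both endpoints of e, with the signs of the two new edges chosen so that each of the l resulting triangles is positive. Then for every k ≥ 1, (G_l,σ) admits no homomorphism to (K_{2k},M). -/

import Mathlib

open SimpleGraph

/-- The sign of a walk in a signed graph `(G, σ)`: the product of the signs of its edges,
counted with multiplicity. -/
def walkSign {V : Type*} {G : SimpleGraph V} (σ : Sym2 V → ℤˣ) {u v : V}
    (w : G.Walk u v) : ℤˣ :=
  (w.edges.map σ).prod

/-- A homomorphism of signed graphs: a graph homomorphism which preserves the signs of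
closed walks. -/
def IsSignedHom {U V : Type*} (G : SimpleGraph U) (σ : Sym2 U → ℤˣ)
    (H : SimpleGraph V) (π : Sym2 V → ℤˣ) (f : G →g H) : Prop :=
  ∀ (u : U) (w : G.Walk u u), walkSign π (w.map f) = walkSign σ w

/-- `(G, σ)` admits a homomorphism to `(H, π)`. -/
def SignedHom {U V : Type*} (G : SimpleGraph U) (σ : Sym2 U → ℤˣ)
    (H : SimpleGraph V) (π : Sym2 V → ℤˣ) : Prop :=
  ∃ f : G →g H, IsSignedHom G σ H π f

/-- The signature on the complete graph `K_n` (with `n` even, vertices `0, …, n-1`) whose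
negative edges form the perfect matching `{01, 23, 45, …}`. -/
def matchSign (n : ℕ) : Sym2 (Fin n) → ℤˣ :=
  Sym2.lift ⟨fun a b => if (a : ℕ) / 2 = (b : ℕ) / 2 then -1 else 1, by
    intro a b
    simp only [eq_comm]⟩

/-- The underlying graph `G_l`: a cycle on the vertices `inl 0, …, inl (l-1)` (with `inl i`
adjacent to `inl (i+1)`, indices mod `l`), together with, for each cycle edge
`inl i — inl (i+1)`, a new vertex `inr i` joined to both of its endpoints. -/
def cyclePlusTriangles (l : ℕ) [NeZero l] : SimpleGraph (Fin l ⊕ Fin l) :=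
  SimpleGraph.fromRel (fun a b =>
    match a, b with
    | Sum.inl i, Sum.inl j => j = i + 1
    | Sum.inr i, Sum.inl j => j = i ∨ j = i + 1
    | _, _ => False)

open Fin.NatCast

lemma list_prod_range {M : Type*} [CommMonoid M] (g : ℕ → M) (n : ℕ) :
    ((List.range n).map g).prod = ∏ i ∈ Finset.range n, g i := by
  induction n with
  | zero => simp
  | succ n ih =>
      rw [List.range_succ, List.map_append, List.prod_append, Finset.prod_range_succ, ih]
      simp

lemma matchSign_mk {n : ℕ} (a b : Fin n) :
    matchSign n s(a, b) = if (a : ℕ) / 2 = (b : ℕ) / 2 then -1 else 1 := by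
  simp [matchSign]

/-- Key local lemma: in `(K_n, M)`, a positive triangle has all its edges positive. -/
lemma matchSign_triangle {n : ℕ} (x y z : Fin n) (hxy : x ≠ y) (hxz : x ≠ z) (hyz : y ≠ z)
    (h : matchSign n s(x, y) * matchSign n s(y, z) * matchSign n s(z, x) = 1) :
    matchSign n s(x, y) = 1 := by
  have hxy' : (x : ℕ) ≠ y := fun hh => hxy (Fin.val_injective hh)
  have hxz' : (x : ℕ) ≠ z := fun hh => hxz (Fin.val_injective hh)
  have hyz' : (y : ℕ) ≠ z := fun hh => hyz (Fin.val_injective hh)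
  rw [matchSign_mk] at *
  rw [matchSign_mk, matchSign_mk] at h
  split_ifs at h ⊢ with h1 h2 h3 <;> first
    | rfl
    | omega
    | (exfalso; revert h; decide)

lemma adj_cyc (l : ℕ) [NeZero l] (hl : 3 ≤ l) (i : Fin l) :
    (cyclePlusTriangles l).Adj (Sum.inl i) (Sum.inl (i + 1)) := by
  have h1 : (1 : Fin l) ≠ 0 := by
    rw [Fin.ne_iff_vne, Fin.val_one', Fin.val_zero, Nat.mod_eq_of_lt (by omega)]
    omega
  refine ⟨?_, Or.inl rfl⟩
  simp only [ne_eq, Sum.inl.injEq]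
  intro hh
  apply h1
  have : i + 1 = i + 0 := by rw [add_zero, ← hh]
  exact add_left_cancel this

lemma adj_tri1 (l : ℕ) [NeZero l] (i : Fin l) :
    (cyclePlusTriangles l).Adj (Sum.inl (i + 1)) (Sum.inr i) := by
  exact ⟨by simp, Or.inr (Or.inr rfl)⟩

lemma adj_tri2 (l : ℕ) [NeZero l] (i : Fin l) :
    (cyclePlusTriangles l).Adj (Sum.inr i) (Sum.inl i) := by
  exact ⟨by simp, Or.inl (Or.inl rfl)⟩

/-- The walk around the base cycle, from `inl 0` to `inl n`. -/
def cycWalk (l : ℕ) [NeZero l] (hl : 3 ≤ l) :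
    (n : ℕ) → (cyclePlusTriangles l).Walk (Sum.inl 0) (Sum.inl ((n : Fin l)))
  | 0 => SimpleGraph.Walk.nil
  | n + 1 => ((cycWalk l hl n).concat
      (by rw [Nat.cast_add, Nat.cast_one]; exact adj_cyc l hl (n : Fin l)))

lemma cycWalk_edges (l : ℕ) [NeZero l] (hl : 3 ≤ l) (n : ℕ) :
    (cycWalk l hl n).edges
      = (List.range n).map
          (fun i : ℕ => s((Sum.inl (i : Fin l) : Fin l ⊕ Fin l), (Sum.inl ((i : Fin l) + 1) : Fin l ⊕ Fin l))) := by
  induction n with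
  | zero => rfl
  | succ n ih =>
      rw [cycWalk, SimpleGraph.Walk.edges_concat, ih, List.range_succ, List.map_append]
      simp

theorem cyclePlusTriangles_no_hom (l : ℕ) [NeZero l] (hl : 3 ≤ l)
    (σ : Sym2 (Fin l ⊕ Fin l) → ℤˣ)
    (hcyc : ∏ i : Fin l, σ s(Sum.inl i, Sum.inl (i + 1)) = -1)
    (htri : ∀ i : Fin l,
      σ s(Sum.inl i, Sum.inl (i + 1)) * σ s(Sum.inl i, Sum.inr i) *
        σ s(Sum.inl (i + 1), Sum.inr i) = 1)
    (k : ℕ) (hk : 1 ≤ k) :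
    ¬ SignedHom (cyclePlusTriangles l) σ (⊤ : SimpleGraph (Fin (2 * k))) (matchSign (2 * k)) := by
  rintro ⟨f, hf⟩
  set π := matchSign (2 * k) with hπ
  -- each cycle edge has a positive image
  have key : ∀ i : Fin l, π s(f (Sum.inl i), f (Sum.inl (i + 1))) = 1 := by
    intro i
    -- the triangle walk at i
    set T : (cyclePlusTriangles l).Walk (Sum.inl i) (Sum.inl i) :=
      SimpleGraph.Walk.cons (adj_cyc l hl i)
        (SimpleGraph.Walk.cons (adj_tri1 l i)
          (SimpleGraph.Walk.cons (adj_tri2 l i) SimpleGraph.Walk.nil)) with hT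
    have hσT : walkSign σ T = 1 := by
      have h3 : σ s(Sum.inr i, Sum.inl i) = σ s(Sum.inl i, Sum.inr i) := by
        rw [Sym2.eq_swap]
      simp only [hT, walkSign, SimpleGraph.Walk.edges_cons, SimpleGraph.Walk.edges_nil,
        List.map_cons, List.map_nil, List.prod_cons, List.prod_nil, mul_one, h3]
      rw [mul_comm (σ s(Sum.inl (i + 1), Sum.inr i)) (σ s(Sum.inl i, Sum.inr i)), ← mul_assoc]
      exact htri i
    have hπT := hf _ T
    rw [hσT] at hπT
    have hπT' : π s(f (Sum.inl i), f (Sum.inl (i + 1)))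
        * π s(f (Sum.inl (i + 1)), f (Sum.inr i))
        * π s(f (Sum.inr i), f (Sum.inl i)) = 1 := by
      simpa [hT, walkSign, mul_assoc] using hπT
    have d1 : f (Sum.inl i) ≠ f (Sum.inl (i + 1)) := by
      have := f.map_adj (adj_cyc l hl i); simpa using this
    have d2 : f (Sum.inl i) ≠ f (Sum.inr i) := by
      have := f.map_adj (adj_tri2 l i); simp at this; exact Ne.symm this
    have d3 : f (Sum.inl (i + 1)) ≠ f (Sum.inr i) := by
      have := f.map_adj (adj_tri1 l i); simpa using this
    exact matchSign_triangle _ _ _ d1 d2 d3 hπT'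
  -- the base cycle as a closed walk
  have hll : ((l : Fin l)) = 0 := Fin.natCast_self l
  set W : (cyclePlusTriangles l).Walk (Sum.inl 0) (Sum.inl 0) :=
    (cycWalk l hl l).copy rfl (by rw [hll]) with hW
  have hedges : W.edges
      = (List.range l).map
          (fun i : ℕ => s((Sum.inl (i : Fin l) : Fin l ⊕ Fin l), (Sum.inl ((i : Fin l) + 1) : Fin l ⊕ Fin l))) := by
    rw [hW, SimpleGraph.Walk.edges_copy, cycWalk_edges]
  have hσW : walkSign σ W = -1 := by
    rw [walkSign, hedges, List.map_map, list_prod_range]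
    simp only [Function.comp_apply]
    rw [Finset.prod_range (fun i : ℕ => σ s(Sum.inl (i : Fin l), Sum.inl ((i : Fin l) + 1))),
      ← hcyc]
    apply Finset.prod_congr rfl
    intro i _
    rw [Fin.cast_val_eq_self]
  have hπW : walkSign π (W.map f) = 1 := by
    rw [walkSign, SimpleGraph.Walk.edges_map, hedges, List.map_map, List.map_map,
      list_prod_range]
    apply Finset.prod_eq_one
    intro i _
    simp only [Function.comp_apply, Sym2.map_pair_eq]
    exact key _
  have := hf _ W
  rw [hσW, hπW] at this
  exact absurd this (by decide)
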